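/- Let C be a unital algebra over ℂ, let N and L be positive integers, let u₁,…,u_N ∈ C be invertible elements, and let (ρ_{i,j})_{1≤i<j≤N} be complex numbers of absolute value 1 such that u_i u_j = ρ_{i,j} u_j u_i for all 1 ≤ i < j ≤ N. Let φ : C → ℂ be a linear functional such that φ(u₁^{λ₁}⋯u_N^{λ_N}) = 0 for every nonzero (λ₁,…,λ_N) ∈ ℤ^N with |λ_j| < L for all j. Then for every odd positive integer n < L, all indices i₁,…,i_n ∈ {1,…,N} and all exponents ε(1),…,ε(n) ∈ {1,−1}, one has φ(u_{i₁}^{ε(1)}⋯u_{i_n}^{ε(n)}) = 0. -/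

import Mathlib

noncomputable section

private lemma prod_ofFn_congr {M : Type*} [Monoid M] {n : ℕ} {f g : Fin n → M}
    (h : ∀ j, f j = g j) : (List.ofFn f).prod = (List.ofFn g).prod := by
  rw [funext h]

private lemma aux_move_in {G : Type*} [Group G] :
    ∀ (N : ℕ) (F : Fin N → G), (∀ p q, Commute (F p) (F q)) →
    ∀ (g : Fin N → ℤ) (k : Fin N) (e : ℤ),
      F k ^ e * (List.ofFn fun j => F j ^ g j).prod
        = (List.ofFn fun j => F j ^ (Function.update g k (e + g k)) j).prod := by
  intro N
  induction N with
  | zero => intro F _ g k e; exact k.elim0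
  | succ n ih =>
    intro F hF g k e
    rw [List.ofFn_succ, List.ofFn_succ, List.prod_cons, List.prod_cons]
    induction k using Fin.cases with
    | zero =>
      rw [← mul_assoc, ← zpow_add, Function.update_self]
      congr 1
    | succ k' =>
      rw [← mul_assoc, ((hF k'.succ 0).zpow_zpow e (g 0)).eq, mul_assoc,
        ih (fun j => F j.succ) (fun p q => hF p.succ q.succ) (fun j => g j.succ) k' e,
        Function.update_of_ne (Fin.succ_ne_zero k').symm]
      congr 1
      refine prod_ofFn_congr fun j => ?_
      by_cases h : j = k'
      · subst h
        rw [Function.update_self, Function.update_self]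
      · rw [Function.update_of_ne h,
          Function.update_of_ne (fun hh => h (Fin.succ_injective _ hh))]

private lemma aux_word {G : Type*} [Group G] (N : ℕ) (F : Fin N → G)
    (hF : ∀ p q, Commute (F p) (F q)) :
    ∀ l : List (Fin N × ℤ),
      (l.map fun p => F p.1 ^ p.2).prod
        = (List.ofFn fun j => F j ^ (l.map fun p => if p.1 = j then p.2 else 0).sum).prod := by
  intro l
  induction l with
  | nil =>
    simp only [List.map_nil, List.prod_nil, List.sum_nil, zpow_zero, List.ofFn_const,
      List.prod_replicate, one_pow]
  | cons p t ih =>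
    rw [List.map_cons, List.prod_cons, ih, aux_move_in N F hF _ p.1 p.2]
    refine prod_ofFn_congr fun j => ?_
    rw [List.map_cons, List.sum_cons]
    by_cases h : j = p.1
    · subst h
      rw [Function.update_self, if_pos rfl]
    · rw [Function.update_of_ne h, if_neg (fun hh => h hh.symm), zero_add]

/-- **Proposition 1.6.2, part 1 (algebraic core).** Let `u₁, …, u_N` be
invertible elements of a unital `ℂ`-algebra with `u_i u_j = ρ_{i,j} u_j u_i`
for `i < j`, where `|ρ_{i,j}| = 1`, and let `φ` be a linear functional that
kills all words `u₁^{λ₁} ⋯ u_N^{λ_N}` with `(λ₁,…,λ_N) ≠ 0` and `|λ_j| < L`.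
Then `φ` kills every word `u_{i₁}^{ε(1)} ⋯ u_{i_n}^{ε(n)}` of odd length
`n < L` with exponents `ε(m) ∈ {1, -1}`. -/
theorem odd_word_vanishes
    (C : Type*) [Ring C] [Algebra ℂ C] (N L : ℕ) (hN : 0 < N) (hL : 0 < L)
    (u : Fin N → Cˣ) (ρ : Fin N → Fin N → ℂ)
    (hρ : ∀ i j : Fin N, i < j → ‖ρ i j‖ = 1)
    (hcomm : ∀ i j : Fin N, i < j →
      (u i : C) * (u j : C) = ρ i j • ((u j : C) * (u i : C)))
    (φ : C →ₗ[ℂ] ℂ)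
    (hφ : ∀ lam : Fin N → ℤ, lam ≠ 0 → (∀ j, (lam j).natAbs < L) →
      φ ((List.ofFn fun j => ((u j ^ lam j : Cˣ) : C)).prod) = 0) :
    ∀ (n : ℕ), Odd n → n < L → ∀ (i : Fin n → Fin N) (ε : Fin n → ℤ),
      (∀ m, ε m = 1 ∨ ε m = -1) →
      φ ((List.ofFn fun m => ((u (i m) ^ ε m : Cˣ) : C)).prod) = 0 := by
  intro n hn hnL i ε hε
  classical
  set σ : ℂˣ →* Cˣ := Units.map (algebraMap ℂ C).toMonoidHom with hσdef
  have hσcomm : ∀ (c : ℂˣ) (x : Cˣ), σ c * x = x * σ c := by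
    intro c x
    ext
    simp only [Units.val_mul, hσdef, Units.coe_map, RingHom.toMonoidHom_eq_coe,
      MonoidHom.coe_coe]
    exact Algebra.commutes (c : ℂ) (x : C)
  set S : Subgroup Cˣ := σ.range with hSdef
  haveI hSn : S.Normal := by
    constructor
    rintro _ ⟨c, rfl⟩ g
    rw [← hσcomm c g, mul_assoc, mul_inv_cancel, mul_one]
    exact ⟨c, rfl⟩
  set π : Cˣ →* Cˣ ⧸ S := QuotientGroup.mk' S with hπdef
  have hπσ : ∀ c : ℂˣ, π (σ c) = 1 := fun c => (QuotientGroup.eq_one_iff _).2 ⟨c, rfl⟩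
  have key : ∀ a b : Fin N, a < b → Commute (π (u a)) (π (u b)) := by
    intro a b hab
    have hρne : ρ a b ≠ 0 := by
      intro h
      have := hρ a b hab
      rw [h] at this
      simp at this
    have hru : IsUnit (ρ a b) := isUnit_iff_ne_zero.2 hρne
    have hU : u a * u b = σ hru.unit * (u b * u a) := by
      ext
      simp only [Units.val_mul, hσdef, Units.coe_map, RingHom.toMonoidHom_eq_coe,
        MonoidHom.coe_coe, IsUnit.unit_spec]
      rw [hcomm a b hab, Algebra.smul_def]
    have := congrArg π hU
    rw [map_mul, map_mul, hπσ, one_mul, map_mul] at this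
    exact this
  have hF : ∀ p q : Fin N, Commute (π (u p)) (π (u q)) := by
    intro p q
    rcases lt_trichotomy p q with h | h | h
    · exact key p q h
    · subst h; exact Commute.refl _
    · exact (key q p h).symm
  set l : List (Fin N × ℤ) := List.ofFn fun m => (i m, ε m) with hldef
  set lam : Fin N → ℤ := fun j => (l.map fun p => if p.1 = j then p.2 else 0).sum with hlamdef
  have hlamFin : ∀ j, lam j = ∑ m : Fin n, if i m = j then ε m else 0 := by
    intro j
    rw [hlamdef]
    simp only [hldef, List.map_ofFn]
    rw [List.sum_ofFn]
    rfl
  -- the two unit words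
  set A : Cˣ := (List.ofFn fun m => u (i m) ^ ε m).prod with hAdef
  set B : Cˣ := (List.ofFn fun j => u j ^ lam j).prod with hBdef
  have hπAB : π A = π B := by
    have h1 : π A = (List.ofFn fun m => π (u (i m)) ^ ε m).prod := by
      rw [hAdef, map_list_prod, List.map_ofFn]
      exact prod_ofFn_congr fun m => map_zpow π (u (i m)) (ε m)
    have h2 : π B = (List.ofFn fun j => π (u j) ^ lam j).prod := by
      rw [hBdef, map_list_prod, List.map_ofFn]
      exact prod_ofFn_congr fun j => map_zpow π (u j) (lam j)
    have h3 := aux_word N (fun j => π (u j)) hF l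
    have h4 : (l.map fun p => π (u p.1) ^ p.2) = List.ofFn fun m => π (u (i m)) ^ ε m := by
      rw [hldef, List.map_ofFn]
      rfl
    rw [h1, h2, ← h4, h3]
  obtain ⟨c, hc⟩ : A⁻¹ * B ∈ S := by
    rw [← QuotientGroup.eq_one_iff (A⁻¹ * B)]
    have : π (A⁻¹ * B) = 1 := by
      rw [map_mul, map_inv, hπAB, inv_mul_cancel]
    exact this
  have hAB : A = σ c⁻¹ * B := by
    have hB : B = A * σ c := by
      rw [hc, ← mul_assoc, mul_inv_cancel, one_mul]
    rw [hB, map_inv, ← hσcomm, ← mul_assoc, inv_mul_cancel, one_mul]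
  have hABC : (A : C) = ((c⁻¹ : ℂˣ) : ℂ) • (B : C) := by
    rw [hAB]
    simp only [Units.val_mul, hσdef, Units.coe_map, RingHom.toMonoidHom_eq_coe,
      MonoidHom.coe_coe]
    rw [Algebra.smul_def]
  have hAval : (List.ofFn fun m => ((u (i m) ^ ε m : Cˣ) : C)).prod = (A : C) := by
    change (List.ofFn ((Units.coeHom C) ∘ fun m => u (i m) ^ ε m)).prod
      = (Units.coeHom C) A
    rw [← List.map_ofFn, ← map_list_prod, hAdef]
  have hBval : (List.ofFn fun j => ((u j ^ lam j : Cˣ) : C)).prod = (B : C) := by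
    change (List.ofFn ((Units.coeHom C) ∘ fun j => u j ^ lam j)).prod
      = (Units.coeHom C) B
    rw [← List.map_ofFn, ← map_list_prod, hBdef]
  -- lam is nonzero
  have hsum : ∑ j, lam j = ∑ m, ε m := by
    calc ∑ j, lam j = ∑ j, ∑ m : Fin n, if i m = j then ε m else 0 :=
          Finset.sum_congr rfl fun j _ => hlamFin j
      _ = ∑ m : Fin n, ∑ j, if i m = j then ε m else 0 := Finset.sum_comm
      _ = ∑ m, ε m := by
          refine Finset.sum_congr rfl fun m _ => ?_
          rw [Finset.sum_ite_eq Finset.univ (i m) (fun _ => ε m)]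
          simp
  have hcast1 : ∀ m : Fin n, ((ε m : ℤ) : ZMod 2) = 1 := by
    intro m
    rcases hε m with h | h <;> rw [h] <;> push_cast <;> decide
  have hlam0 : lam ≠ 0 := by
    intro h0
    have hz : ∑ m, ε m = 0 := by
      rw [← hsum, h0]
      simp
    have h2 : ((∑ m, ε m : ℤ) : ZMod 2) = (n : ZMod 2) := by
      push_cast
      calc ∑ m : Fin n, ((ε m : ℤ) : ZMod 2) = ∑ _m : Fin n, (1 : ZMod 2) :=
            Finset.sum_congr rfl fun m _ => hcast1 m
        _ = (n : ZMod 2) := by simp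
    have hodd2 : (n : ZMod 2) = 1 := by
      obtain ⟨k, rfl⟩ := hn
      push_cast
      rw [show ((2 : ZMod 2)) = 0 by decide]
      ring
    rw [hz, hodd2] at h2
    simp at h2
  have hlamL : ∀ j, (lam j).natAbs < L := by
    intro j
    have hb : |lam j| ≤ (n : ℤ) := by
      rw [hlamFin j]
      calc |∑ m : Fin n, if i m = j then ε m else 0|
          ≤ ∑ m : Fin n, |if i m = j then ε m else 0| :=
            Finset.abs_sum_le_sum_abs _ _
        _ ≤ ∑ _m : Fin n, (1 : ℤ) := by
            refine Finset.sum_le_sum fun m _ => ?_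
            by_cases h : i m = j
            · rw [if_pos h]
              rcases hε m with h' | h' <;> rw [h'] <;> decide
            · rw [if_neg h]; decide
        _ = (n : ℤ) := by simp
    rw [Int.abs_eq_natAbs] at hb
    omega
  -- conclude
  have hfin := hφ lam hlam0 hlamL
  rw [hBval] at hfin
  rw [hAval, hABC, map_smul, smul_eq_mul, hfin, mul_zero]
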